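/- arXiv:0912.3652 — 2 statements merged into one kernel-verified Lean document; each statement's English description precedes it below -/
import Mathlib

section
/- Let {L_t} be a Lévy process (independent stationary increments, L_0 = 0) whose marginals admit densities. Then for 0 ≤ t_1 < ⋯ < t_m < t ≤ T, the conditional law of L_t given (L_{t_1}, …, L_{t_m}, L_T) equals the conditional law of L_t given (L_{t_m}, L_T); i.e., the bridge of the Lévy process pinned at L_T = x is a Markov process. -/
open MeasureTheory ProbabilityTheory Real

section Aux

open MeasurableSpace

variable {Ω : Type*} [MeasurableSpace Ω]

lemma aux_comap_prod_mk {α β : Type*} [mα : MeasurableSpace α] [mβ : MeasurableSpace β]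
    (a : Ω → α) (b : Ω → β) :
    MeasurableSpace.comap (fun ω => (a ω, b ω)) Prod.instMeasurableSpace
      = MeasurableSpace.comap a mα ⊔ MeasurableSpace.comap b mβ := by
  rw [show (Prod.instMeasurableSpace : MeasurableSpace (α × β))
      = mα.comap Prod.fst ⊔ mβ.comap Prod.snd from rfl, MeasurableSpace.comap_sup,
    MeasurableSpace.comap_comp, MeasurableSpace.comap_comp]
  rfl

lemma aux_comap_pi {ι : Type*} (f : ι → Ω → ℝ) :
    MeasurableSpace.comap (fun ω (i : ι) => f i ω) MeasurableSpace.pi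
      = ⨆ i, MeasurableSpace.comap (f i) Real.measurableSpace := by
  rw [show (MeasurableSpace.pi : MeasurableSpace (ι → ℝ))
      = ⨆ i, Real.measurableSpace.comap (fun g : ι → ℝ => g i) from rfl,
    MeasurableSpace.comap_iSup]
  simp_rw [MeasurableSpace.comap_comp]
  rfl

/-- The freezing identity: if `W` and `D` are independent, the lintegral of `H (W ω, D ω)`
can be computed as an iterated integral against the image measures. -/
lemma aux_freeze {γ δ : Type*} [MeasurableSpace γ] [MeasurableSpace δ]
    {P : Measure Ω} [IsProbabilityMeasure P] {W : Ω → γ} {D : Ω → δ}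
    (hW : Measurable W) (hD : Measurable D) (hind : IndepFun W D P)
    (H : γ × δ → ENNReal) (hH : Measurable H) :
    ∫⁻ ω, H (W ω, D ω) ∂P = ∫⁻ w, ∫⁻ d, H (w, d) ∂(P.map D) ∂(P.map W) := by
  haveI : IsProbabilityMeasure (P.map W) := Measure.isProbabilityMeasure_map hW.aemeasurable
  haveI : IsProbabilityMeasure (P.map D) := Measure.isProbabilityMeasure_map hD.aemeasurable
  have h := (indepFun_iff_map_prod_eq_prod_map_map hW.aemeasurable hD.aemeasurable).mp hind
  rw [← lintegral_map hH (hW.prodMk hD), h, lintegral_prod _ hH.aemeasurable]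

end Aux

/-- The bridge of a Lévy process pinned at its terminal value is a Markov process:
conditionally on the past values `L_{t_1}, …, L_{t_m}` and the terminal value `L_T`,
the law of `L_t` depends only on `(L_{t_m}, L_T)`. -/
theorem levy_bridge_markov {Ω : Type*} [MeasurableSpace Ω]
    (P : Measure Ω) [IsProbabilityMeasure P]
    (L : ℝ → Ω → ℝ) (hLmeas : ∀ t, Measurable (L t))
    (hL0 : ∀ᵐ ω ∂P, L 0 ω = 0)
    (hindep : ∀ (n : ℕ) (u : Fin (n + 1) → ℝ), Monotone u → (∀ i, 0 ≤ u i) →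
      iIndepFun
        (fun i : Fin n => fun ω => L (u i.succ) ω - L (u i.castSucc) ω) P)
    (hstat : ∀ s t : ℝ, 0 ≤ s → s ≤ t →
      Measure.map (fun ω => L t ω - L s ω) P = Measure.map (L (t - s)) P)
    (hdens : ∀ t : ℝ, 0 < t → Measure.map (L t) P ≪ (volume : Measure ℝ))
    (T t : ℝ) (m : ℕ) (ts : Fin (m + 1) → ℝ)
    (hts : StrictMono ts) (h0 : 0 ≤ ts 0) (hlt : ts (Fin.last m) < t) (htT : t ≤ T)
    (B : Set ℝ) (hB : MeasurableSet B) :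
    P[fun ω => Set.indicator B (fun _ => (1 : ℝ)) (L t ω) |
        (⨆ i, MeasurableSpace.comap (L (ts i)) Real.measurableSpace) ⊔
          MeasurableSpace.comap (L T) Real.measurableSpace]
      =ᵐ[P]
    P[fun ω => Set.indicator B (fun _ => (1 : ℝ)) (L t ω) |
        MeasurableSpace.comap (L (ts (Fin.last m))) Real.measurableSpace ⊔
          MeasurableSpace.comap (L T) Real.measurableSpace] := by
  classical
  -- basic data
  set Z : Ω → ℝ := L (ts (Fin.last m)) with hZdef
  set V : Ω → (Fin (m + 1) → ℝ) := fun ω i => L (ts i) ω with hVdef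
  set X : Ω → (Fin (m + 1) → ℝ) × ℝ := fun ω => (V ω, L T ω) with hXdef
  set X' : Ω → ℝ × ℝ := fun ω => (Z ω, L T ω) with hX'def
  set D : Ω → ℝ × ℝ := fun ω => (L t ω - Z ω, L T ω - L t ω) with hDdef
  have hZ : Measurable Z := hLmeas _
  have hV : Measurable V := measurable_pi_lambda _ fun i => hLmeas _
  have hX : Measurable X := hV.prodMk (hLmeas T)
  have hX' : Measurable X' := hZ.prodMk (hLmeas T)
  have hD : Measurable D := ((hLmeas t).sub hZ).prodMk ((hLmeas T).sub (hLmeas t))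
  have htsm : Monotone ts := hts.monotone
  have hts0 : ∀ i, 0 ≤ ts i := fun i => h0.trans (htsm (Fin.zero_le i))
  have ht0 : 0 ≤ t := (hts0 _).trans hlt.le
  have hT0 : 0 ≤ T := ht0.trans htT
  -- rewrite the σ-algebras as comaps
  have hGeq : MeasurableSpace.comap X Prod.instMeasurableSpace
      = (⨆ i, MeasurableSpace.comap (L (ts i)) Real.measurableSpace) ⊔
          MeasurableSpace.comap (L T) Real.measurableSpace := by
    rw [hXdef, aux_comap_prod_mk V (L T), hVdef, aux_comap_pi (fun i => L (ts i))]
  have hHeq : MeasurableSpace.comap X' Prod.instMeasurableSpace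
      = MeasurableSpace.comap Z Real.measurableSpace ⊔
          MeasurableSpace.comap (L T) Real.measurableSpace := by
    rw [hX'def, aux_comap_prod_mk Z (L T)]
  rw [← hGeq, ← hHeq]
  -- the time grid
  set u : Fin (m + 4) → ℝ := fun k =>
    if k.val = 0 then 0
    else if k.val ≤ m + 1 then ts ⟨min (k.val - 1) m, Nat.lt_succ_of_le (min_le_right _ _)⟩
    else if k.val = m + 2 then t else T with hudef
  have hu0 : ∀ k : Fin (m + 4), k.val = 0 → u k = 0 := by
    intro k hk; simp only [hudef]; rw [if_pos hk]
  have huts : ∀ (k : Fin (m + 4)) (j : ℕ) (hj : j ≤ m), k.val = j + 1 →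
      u k = ts ⟨j, Nat.lt_succ_of_le hj⟩ := by
    intro k j hj hk
    simp only [hudef]
    rw [if_neg (by omega), if_pos (by omega)]
    congr 1
    exact Fin.ext (by simp <;> omega)
  have hut : ∀ k : Fin (m + 4), k.val = m + 2 → u k = t := by
    intro k hk
    simp only [hudef]
    rw [if_neg (by omega), if_neg (by omega), if_pos hk]
  have huT : ∀ k : Fin (m + 4), k.val = m + 3 → u k = T := by
    intro k hk
    simp only [hudef]
    rw [if_neg (by omega), if_neg (by omega), if_neg (by omega)]
  have humono : Monotone u := by
    rw [Fin.monotone_iff_le_succ]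
    intro i
    rcases Nat.lt_or_ge i.val 1 with hi | hi
    · have h1 : i.val = 0 := by omega
      rw [hu0 _ (by simp [Fin.castSucc, h1]), huts _ 0 (Nat.zero_le m) (by simp [h1])]
      exact hts0 _
    rcases Nat.lt_or_ge i.val (m + 1) with hi2 | hi2
    · rw [huts _ (i.val - 1) (by omega) (by simp <;> omega),
        huts _ i.val (by omega) (by simp)]
      exact htsm (by simp [Fin.le_def] <;> omega)
    rcases Nat.lt_or_ge i.val (m + 2) with hi3 | hi3
    · have h1 : i.val = m + 1 := by omega
      rw [huts _ m le_rfl (by simp [h1]), hut _ (by simp [h1])]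
      have : ts ⟨m, Nat.lt_succ_of_le le_rfl⟩ = ts (Fin.last m) := by congr 1
      rw [this]; exact hlt.le
    · have h1 : i.val = m + 2 := by omega
      rw [hut _ (by simp [h1]), huT _ (by simp [h1])]
      exact htT
  have hunonneg : ∀ k, 0 ≤ u k := by
    intro k
    simp only [hudef]
    split_ifs
    · exact le_rfl
    · exact hts0 _
    · exact ht0
    · exact hT0
  -- independent increments
  set J : Fin (m + 3) → Ω → ℝ :=
    fun i ω => L (u i.succ) ω - L (u i.castSucc) ω with hJdef
  have hJindep : iIndepFun J P :=
    hindep (m + 3) u humono hunonneg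
  have hJmeas : ∀ i, Measurable (J i) := fun i => (hLmeas _).sub (hLmeas _)
  set S : Finset (Fin (m + 3)) := Finset.univ.filter (fun i => i.val ≤ m) with hSdef
  set S' : Finset (Fin (m + 3)) :=
    {⟨m + 1, by omega⟩, ⟨m + 2, by omega⟩} with hS'def
  have hdisj : Disjoint S S' := by
    rw [Finset.disjoint_left]
    intro a ha hb
    simp only [hSdef, Finset.mem_filter, Finset.mem_univ, true_and] at ha
    simp only [hS'def, Finset.mem_insert, Finset.mem_singleton, Fin.ext_iff] at hb
    omega
  have hblock : IndepFun (fun ω (i : S) => J i ω) (fun ω (i : S') => J i ω) P :=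
    hJindep.indepFun_finset S S' hdisj hJmeas
  -- the maps reconstructing V and D from the increments
  have hcast : (m + 1) ≤ (m + 3) := by omega
  have hmemS : ∀ j : Fin (m + 1), Fin.castLE hcast j ∈ S := by
    intro j
    simp only [hSdef, Finset.mem_filter, Finset.mem_univ, true_and, Fin.coe_castLE]
    omega
  set φ₁ : (S → ℝ) → (Fin (m + 1) → ℝ) :=
    fun x i => ∑ j ∈ Finset.Iic i, x ⟨Fin.castLE hcast j, hmemS j⟩ with hφ₁def
  have hφ₁ : Measurable φ₁ :=
    measurable_pi_lambda _ fun i => Finset.measurable_sum _ fun j _ => measurable_pi_apply _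
  have hmem1 : (⟨m + 1, by omega⟩ : Fin (m + 3)) ∈ S' := by simp [hS'def]
  have hmem2 : (⟨m + 2, by omega⟩ : Fin (m + 3)) ∈ S' := by simp [hS'def]
  set φ₂ : (S' → ℝ) → ℝ × ℝ :=
    fun x => (x ⟨⟨m + 1, by omega⟩, hmem1⟩, x ⟨⟨m + 2, by omega⟩, hmem2⟩) with hφ₂def
  have hφ₂ : Measurable φ₂ := (measurable_pi_apply _).prodMk (measurable_pi_apply _)
  -- identification of D
  have hDeq : (fun ω => φ₂ (fun i : S' => J i ω)) = D := by
    funext ω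
    simp only [hφ₂def, hJdef, hDdef]
    have e1 : u (⟨m + 1, by omega⟩ : Fin (m + 3)).succ = t := hut _ rfl
    have e2 : u (⟨m + 1, by omega⟩ : Fin (m + 3)).castSucc = ts ⟨m, Nat.lt_succ_of_le le_rfl⟩ :=
      huts _ m le_rfl rfl
    have e3 : u (⟨m + 2, by omega⟩ : Fin (m + 3)).succ = T := huT _ rfl
    have e4 : u (⟨m + 2, by omega⟩ : Fin (m + 3)).castSucc = t := hut _ rfl
    rw [e1, e2, e3, e4]
    have : ts ⟨m, Nat.lt_succ_of_le le_rfl⟩ = ts (Fin.last m) := by congr 1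
    rw [this, hZdef]
  -- identification of V (a.e., using L 0 = 0)
  have tele : ∀ ω, L 0 ω = 0 → ∀ i : Fin (m + 1),
      (∑ j ∈ Finset.Iic i, J (Fin.castLE hcast j) ω) = L (ts i) ω := by
    intro ω hω i
    induction i using Fin.induction with
    | zero =>
      have hIic : Finset.Iic (0 : Fin (m + 1)) = {0} := by
        ext j; simp [Fin.le_zero_iff]
      rw [hIic, Finset.sum_singleton]
      simp only [hJdef]
      rw [huts _ 0 (Nat.zero_le m) (by simp), hu0 _ (by simp), hω, sub_zero]
      congr 1
    | succ i ih =>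
      have hIic : Finset.Iic i.succ = insert i.succ (Finset.Iic i.castSucc) := by
        ext j
        simp only [Finset.mem_Iic, Finset.mem_insert, Fin.le_def, Fin.ext_iff, Fin.val_succ,
          Fin.coe_castSucc]
        omega
      rw [hIic, Finset.sum_insert (by simp [Finset.mem_Iic, Fin.le_def])]
      rw [ih]
      simp only [hJdef]
      rw [huts _ (i.val + 1) (by omega) (by simp), huts _ i.val (by omega) (by simp)]
      have e1 : ts ⟨i.val + 1, Nat.lt_succ_of_le (by omega)⟩ = ts i.succ := by
        congr 1
      have e2 : ts ⟨i.val, Nat.lt_succ_of_le (by omega)⟩ = ts i.castSucc := by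
        congr 1
      rw [e1, e2]
      ring
  have hVeq : (fun ω => φ₁ (fun i : S => J i ω)) =ᵐ[P] V := by
    filter_upwards [hL0] with ω hω
    funext i
    simpa only [hφ₁def] using tele ω hω i
  -- the key independence
  have hVD : IndepFun V D P := by
    have h := (hblock.comp hφ₁ hφ₂)
    exact h.congr hVeq (Filter.EventuallyEq.of_eq hDeq)
  have hZD : IndepFun Z D P := by
    have h := hVD.comp (measurable_pi_apply (Fin.last m)) measurable_id
    exact h
  -- measures
  haveI : IsProbabilityMeasure (P.map Z) := Measure.isProbabilityMeasure_map hZ.aemeasurable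
  haveI : IsProbabilityMeasure (P.map V) := Measure.isProbabilityMeasure_map hV.aemeasurable
  haveI : IsProbabilityMeasure (P.map D) := Measure.isProbabilityMeasure_map hD.aemeasurable
  -- the conditional distribution kernel given (Z, L T)
  set κ : ProbabilityTheory.Kernel (ℝ × ℝ) ℝ := condDistrib (L t) X' P with hκdef
  set f : ℝ → ℝ := Set.indicator B (fun _ => (1 : ℝ)) with hfdef
  set g : Ω → ℝ := fun ω => f (L t ω) with hgdef
  have hf_sm : StronglyMeasurable f := stronglyMeasurable_const.indicator hB
  have hgInt : Integrable g P := by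
    have : g = Set.indicator ((L t) ⁻¹' B) (fun _ => (1 : ℝ)) := by
      funext ω
      by_cases h : L t ω ∈ B <;> simp [hgdef, hfdef, Set.indicator, h]
    rw [this]
    exact (integrable_const (1 : ℝ)).indicator (hLmeas t hB)
  set c : Ω → ℝ := fun ω => ∫ y, f y ∂(κ (X' ω)) with hcdef
  have hc : c =ᵐ[P] P[g | MeasurableSpace.comap X' Prod.instMeasurableSpace] :=
    (condExp_ae_eq_integral_condDistrib hX' (hLmeas t).aemeasurable hf_sm hgInt).symm
  -- ennreal versions
  set gE : Ω → ENNReal := fun ω => Set.indicator B (1 : ℝ → ENNReal) (L t ω) with hgEdef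
  set cE : Ω → ENNReal := fun ω => κ (X' ω) B with hcEdef
  have hgE_meas : Measurable gE := ((measurable_one.indicator hB)).comp (hLmeas t)
  have hcE_meas : Measurable cE := (ProbabilityTheory.Kernel.measurable_coe κ hB).comp hX'
  have hgE_eq : ∀ ω, ENNReal.ofReal (g ω) = gE ω := by
    intro ω
    by_cases h : L t ω ∈ B <;> simp [hgdef, hfdef, hgEdef, Set.indicator, h]
  have hcval : ∀ ω, c ω = (κ (X' ω) B).toReal := by
    intro ω
    simp only [hcdef, hfdef]
    exact integral_indicator_one hB
  have hcE_eq : ∀ ω, ENNReal.ofReal (c ω) = cE ω := by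
    intro ω
    rw [hcval ω]
    exact ENNReal.ofReal_toReal (measure_ne_top _ _)
  -- the core computation
  have core : ∀ (A : Set (Fin (m + 1) → ℝ)) (C : Set ℝ),
      MeasurableSet A → MeasurableSet C →
      ∫⁻ ω in V ⁻¹' A ∩ (L T) ⁻¹' C, gE ω ∂P
        = ∫⁻ ω in V ⁻¹' A ∩ (L T) ⁻¹' C, cE ω ∂P := by
    intro A C hA hC
    -- inner functions
    set F₁ : ℝ → ENNReal := fun z =>
      ∫⁻ d, Set.indicator C 1 (z + d.1 + d.2) * Set.indicator B 1 (z + d.1) ∂(P.map D)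
      with hF₁def
    set F₂ : ℝ → ENNReal := fun z =>
      ∫⁻ d, Set.indicator C 1 (z + d.1 + d.2) * κ (z, z + d.1 + d.2) B ∂(P.map D)
      with hF₂def
    have hk₁ : Measurable fun p : ℝ × (ℝ × ℝ) =>
        Set.indicator C (1 : ℝ → ENNReal) (p.1 + p.2.1 + p.2.2)
          * Set.indicator B (1 : ℝ → ENNReal) (p.1 + p.2.1) :=
      ((measurable_one.indicator hC).comp
        ((measurable_fst.add (measurable_snd.fst)).add measurable_snd.snd)).mul
        ((measurable_one.indicator hB).comp (measurable_fst.add measurable_snd.fst))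
    have hk₂ : Measurable fun p : ℝ × (ℝ × ℝ) =>
        Set.indicator C (1 : ℝ → ENNReal) (p.1 + p.2.1 + p.2.2)
          * κ (p.1, p.1 + p.2.1 + p.2.2) B :=
      ((measurable_one.indicator hC).comp
        ((measurable_fst.add (measurable_snd.fst)).add measurable_snd.snd)).mul
        ((ProbabilityTheory.Kernel.measurable_coe κ hB).comp
          (measurable_fst.prodMk
            ((measurable_fst.add (measurable_snd.fst)).add measurable_snd.snd)))
    have hF₁m : Measurable F₁ := hk₁.lintegral_prod_right'
    have hF₂m : Measurable F₂ := hk₂.lintegral_prod_right'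
    -- the (♦) identity: F₁ = F₂ a.e. w.r.t. the law of Z
    have hdiamond : F₁ =ᵐ[P.map Z] F₂ := by
      apply ae_eq_of_forall_setLIntegral_eq_of_sigmaFinite hF₁m hF₂m
      intro A₀ hA₀ _
      -- freeze each side
      have hH₁ : Measurable fun p : ℝ × (ℝ × ℝ) =>
          Set.indicator A₀ (1 : ℝ → ENNReal) p.1 *
            (Set.indicator C (1 : ℝ → ENNReal) (p.1 + p.2.1 + p.2.2)
              * Set.indicator B (1 : ℝ → ENNReal) (p.1 + p.2.1)) :=
        ((measurable_one.indicator hA₀).comp measurable_fst).mul hk₁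
      have hH₂ : Measurable fun p : ℝ × (ℝ × ℝ) =>
          Set.indicator A₀ (1 : ℝ → ENNReal) p.1 *
            (Set.indicator C (1 : ℝ → ENNReal) (p.1 + p.2.1 + p.2.2)
              * κ (p.1, p.1 + p.2.1 + p.2.2) B) :=
        ((measurable_one.indicator hA₀).comp measurable_fst).mul hk₂
      have hfr₁ : ∫⁻ ω, Set.indicator A₀ (1 : ℝ → ENNReal) (Z ω) *
            (Set.indicator C (1 : ℝ → ENNReal) (Z ω + (D ω).1 + (D ω).2)
              * Set.indicator B (1 : ℝ → ENNReal) (Z ω + (D ω).1)) ∂P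
          = ∫⁻ z, ∫⁻ d, Set.indicator A₀ (1 : ℝ → ENNReal) z *
            (Set.indicator C (1 : ℝ → ENNReal) (z + d.1 + d.2)
              * Set.indicator B (1 : ℝ → ENNReal) (z + d.1)) ∂(P.map D) ∂(P.map Z) :=
        aux_freeze hZ hD hZD _ hH₁
      have hfr₂ : ∫⁻ ω, Set.indicator A₀ (1 : ℝ → ENNReal) (Z ω) *
            (Set.indicator C (1 : ℝ → ENNReal) (Z ω + (D ω).1 + (D ω).2)
              * κ (Z ω, Z ω + (D ω).1 + (D ω).2) B) ∂P
          = ∫⁻ z, ∫⁻ d, Set.indicator A₀ (1 : ℝ → ENNReal) z *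
            (Set.indicator C (1 : ℝ → ENNReal) (z + d.1 + d.2)
              * κ (z, z + d.1 + d.2) B) ∂(P.map D) ∂(P.map Z) :=
        aux_freeze hZ hD hZD _ hH₂
      -- compute the iterated integrals
      have hiter₁ : ∫⁻ z, ∫⁻ d, Set.indicator A₀ (1 : ℝ → ENNReal) z *
            (Set.indicator C (1 : ℝ → ENNReal) (z + d.1 + d.2)
              * Set.indicator B (1 : ℝ → ENNReal) (z + d.1)) ∂(P.map D) ∂(P.map Z)
          = ∫⁻ z in A₀, F₁ z ∂(P.map Z) := by
        rw [← lintegral_indicator hA₀]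
        congr 1
        funext z
        have hmz : Measurable fun d : ℝ × ℝ =>
            Set.indicator C (1 : ℝ → ENNReal) (z + d.1 + d.2)
              * Set.indicator B (1 : ℝ → ENNReal) (z + d.1) := by
          exact hk₁.comp (measurable_const.prodMk measurable_id)
        rw [lintegral_const_mul _ hmz]
        by_cases h : z ∈ A₀ <;> simp [Set.indicator, h, hF₁def]
      have hiter₂ : ∫⁻ z, ∫⁻ d, Set.indicator A₀ (1 : ℝ → ENNReal) z *
            (Set.indicator C (1 : ℝ → ENNReal) (z + d.1 + d.2)
              * κ (z, z + d.1 + d.2) B) ∂(P.map D) ∂(P.map Z)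
          = ∫⁻ z in A₀, F₂ z ∂(P.map Z) := by
        rw [← lintegral_indicator hA₀]
        congr 1
        funext z
        have hmz : Measurable fun d : ℝ × ℝ =>
            Set.indicator C (1 : ℝ → ENNReal) (z + d.1 + d.2)
              * κ (z, z + d.1 + d.2) B := by
          exact hk₂.comp (measurable_const.prodMk measurable_id)
        rw [lintegral_const_mul _ hmz]
        by_cases h : z ∈ A₀ <;> simp [Set.indicator, h, hF₂def]
      -- identify the Ω-side integrands
      have hΩ₁ : (fun ω => Set.indicator A₀ (1 : ℝ → ENNReal) (Z ω) *
            (Set.indicator C (1 : ℝ → ENNReal) (Z ω + (D ω).1 + (D ω).2)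
              * Set.indicator B (1 : ℝ → ENNReal) (Z ω + (D ω).1)))
          = fun ω => Set.indicator (X' ⁻¹' (A₀ ×ˢ C) ∩ (L t) ⁻¹' B) 1 ω := by
        funext ω
        have e1 : Z ω + (D ω).1 = L t ω := by simp [hDdef]
        have e2 : Z ω + (D ω).1 + (D ω).2 = L T ω := by simp [hDdef]
        rw [e2, e1]
        by_cases h1 : Z ω ∈ A₀ <;> by_cases h2 : L T ω ∈ C <;> by_cases h3 : L t ω ∈ B <;>
          simp [Set.indicator, Set.mem_prod, hX'def, h1, h2, h3]
      have hΩ₂ : (fun ω => Set.indicator A₀ (1 : ℝ → ENNReal) (Z ω) *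
            (Set.indicator C (1 : ℝ → ENNReal) (Z ω + (D ω).1 + (D ω).2)
              * κ (Z ω, Z ω + (D ω).1 + (D ω).2) B))
          = fun ω => Set.indicator (X' ⁻¹' (A₀ ×ˢ C)) (fun ω' => κ (X' ω') B) ω := by
        funext ω
        have e2 : Z ω + (D ω).1 + (D ω).2 = L T ω := by simp [hDdef]
        rw [e2]
        by_cases h1 : Z ω ∈ A₀ <;> by_cases h2 : L T ω ∈ C <;>
          simp [Set.indicator, Set.mem_prod, hX'def, h1, h2]
      -- the condDistrib defining property
      have hκprop : ∫⁻ ω in X' ⁻¹' (A₀ ×ˢ C), κ (X' ω) B ∂P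
          = P (X' ⁻¹' (A₀ ×ˢ C) ∩ (L t) ⁻¹' B) :=
        setLIntegral_preimage_condDistrib hX' ((hLmeas t).aemeasurable : AEMeasurable (L t) P) hB (hA₀.prod hC)
      calc ∫⁻ z in A₀, F₁ z ∂(P.map Z)
          = ∫⁻ ω, Set.indicator (X' ⁻¹' (A₀ ×ˢ C) ∩ (L t) ⁻¹' B) 1 ω ∂P := by
            rw [← hiter₁, ← hfr₁, ← hΩ₁]
        _ = P (X' ⁻¹' (A₀ ×ˢ C) ∩ (L t) ⁻¹' B) :=
            lintegral_indicator_one ((hX' (hA₀.prod hC)).inter (hLmeas t hB))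
        _ = ∫⁻ ω in X' ⁻¹' (A₀ ×ˢ C), κ (X' ω) B ∂P := hκprop.symm
        _ = ∫⁻ ω, Set.indicator (X' ⁻¹' (A₀ ×ˢ C)) (fun ω' => κ (X' ω') B) ω ∂P := by
            rw [lintegral_indicator (hX' (hA₀.prod hC))]
        _ = ∫⁻ z in A₀, F₂ z ∂(P.map Z) := by
            rw [← hΩ₂, hfr₂, hiter₂]
    -- transfer the a.e. identity to the law of V
    have hmapVZ : (P.map V).map (fun v : Fin (m + 1) → ℝ => v (Fin.last m)) = P.map Z := by
      rw [Measure.map_map (measurable_pi_apply _) hV]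
      rfl
    have hdV : ∀ᵐ v ∂(P.map V), F₁ (v (Fin.last m)) = F₂ (v (Fin.last m)) := by
      have h' : ∀ᵐ z ∂((P.map V).map (fun v : Fin (m + 1) → ℝ => v (Fin.last m))),
          F₁ z = F₂ z := by rw [hmapVZ]; exact hdiamond
      exact ae_of_ae_map (f := fun v : Fin (m + 1) → ℝ => v (Fin.last m))
        (measurable_pi_apply _).aemeasurable h'
    -- freeze over (V, D)
    have hH₁' : Measurable fun p : (Fin (m + 1) → ℝ) × (ℝ × ℝ) =>
        Set.indicator A (1 : (Fin (m + 1) → ℝ) → ENNReal) p.1 *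
          (Set.indicator C (1 : ℝ → ENNReal) (p.1 (Fin.last m) + p.2.1 + p.2.2)
            * Set.indicator B (1 : ℝ → ENNReal) (p.1 (Fin.last m) + p.2.1)) := by
      have h2 : Measurable fun p : (Fin (m + 1) → ℝ) × (ℝ × ℝ) => (p.1 (Fin.last m), p.2) :=
        ((measurable_pi_apply _).comp measurable_fst).prodMk measurable_snd
      exact ((measurable_one.indicator hA).comp measurable_fst).mul (hk₁.comp h2)
    have hH₂' : Measurable fun p : (Fin (m + 1) → ℝ) × (ℝ × ℝ) =>
        Set.indicator A (1 : (Fin (m + 1) → ℝ) → ENNReal) p.1 *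
          (Set.indicator C (1 : ℝ → ENNReal) (p.1 (Fin.last m) + p.2.1 + p.2.2)
            * κ (p.1 (Fin.last m), p.1 (Fin.last m) + p.2.1 + p.2.2) B) := by
      have h2 : Measurable fun p : (Fin (m + 1) → ℝ) × (ℝ × ℝ) => (p.1 (Fin.last m), p.2) :=
        ((measurable_pi_apply _).comp measurable_fst).prodMk measurable_snd
      exact ((measurable_one.indicator hA).comp measurable_fst).mul (hk₂.comp h2)
    have hfr₁' : ∫⁻ ω, Set.indicator A (1 : (Fin (m + 1) → ℝ) → ENNReal) (V ω) *
          (Set.indicator C (1 : ℝ → ENNReal) (V ω (Fin.last m) + (D ω).1 + (D ω).2)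
            * Set.indicator B (1 : ℝ → ENNReal) (V ω (Fin.last m) + (D ω).1)) ∂P
        = ∫⁻ v, ∫⁻ d, Set.indicator A (1 : (Fin (m + 1) → ℝ) → ENNReal) v *
          (Set.indicator C (1 : ℝ → ENNReal) (v (Fin.last m) + d.1 + d.2)
            * Set.indicator B (1 : ℝ → ENNReal) (v (Fin.last m) + d.1)) ∂(P.map D) ∂(P.map V) :=
      aux_freeze hV hD hVD _ hH₁'
    have hfr₂' : ∫⁻ ω, Set.indicator A (1 : (Fin (m + 1) → ℝ) → ENNReal) (V ω) *
          (Set.indicator C (1 : ℝ → ENNReal) (V ω (Fin.last m) + (D ω).1 + (D ω).2)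
            * κ (V ω (Fin.last m), V ω (Fin.last m) + (D ω).1 + (D ω).2) B) ∂P
        = ∫⁻ v, ∫⁻ d, Set.indicator A (1 : (Fin (m + 1) → ℝ) → ENNReal) v *
          (Set.indicator C (1 : ℝ → ENNReal) (v (Fin.last m) + d.1 + d.2)
            * κ (v (Fin.last m), v (Fin.last m) + d.1 + d.2) B) ∂(P.map D) ∂(P.map V) :=
      aux_freeze hV hD hVD _ hH₂'
    have hiter₁' : ∫⁻ v, ∫⁻ d, Set.indicator A (1 : (Fin (m + 1) → ℝ) → ENNReal) v *
          (Set.indicator C (1 : ℝ → ENNReal) (v (Fin.last m) + d.1 + d.2)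
            * Set.indicator B (1 : ℝ → ENNReal) (v (Fin.last m) + d.1)) ∂(P.map D) ∂(P.map V)
        = ∫⁻ v, Set.indicator A (1 : (Fin (m + 1) → ℝ) → ENNReal) v
            * F₁ (v (Fin.last m)) ∂(P.map V) := by
      congr 1
      funext v
      have hmz : Measurable fun d : ℝ × ℝ =>
          Set.indicator C (1 : ℝ → ENNReal) (v (Fin.last m) + d.1 + d.2)
            * Set.indicator B (1 : ℝ → ENNReal) (v (Fin.last m) + d.1) := by
        exact hk₁.comp (measurable_const.prodMk measurable_id)
      rw [lintegral_const_mul _ hmz]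
    have hiter₂' : ∫⁻ v, ∫⁻ d, Set.indicator A (1 : (Fin (m + 1) → ℝ) → ENNReal) v *
          (Set.indicator C (1 : ℝ → ENNReal) (v (Fin.last m) + d.1 + d.2)
            * κ (v (Fin.last m), v (Fin.last m) + d.1 + d.2) B) ∂(P.map D) ∂(P.map V)
        = ∫⁻ v, Set.indicator A (1 : (Fin (m + 1) → ℝ) → ENNReal) v
            * F₂ (v (Fin.last m)) ∂(P.map V) := by
      congr 1
      funext v
      have hmz : Measurable fun d : ℝ × ℝ =>
          Set.indicator C (1 : ℝ → ENNReal) (v (Fin.last m) + d.1 + d.2)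
            * κ (v (Fin.last m), v (Fin.last m) + d.1 + d.2) B := by
        exact hk₂.comp (measurable_const.prodMk measurable_id)
      rw [lintegral_const_mul _ hmz]
    have hmid : ∫⁻ v, Set.indicator A (1 : (Fin (m + 1) → ℝ) → ENNReal) v
          * F₁ (v (Fin.last m)) ∂(P.map V)
        = ∫⁻ v, Set.indicator A (1 : (Fin (m + 1) → ℝ) → ENNReal) v
          * F₂ (v (Fin.last m)) ∂(P.map V) := by
      apply lintegral_congr_ae
      filter_upwards [hdV] with v hv
      rw [hv]
    -- identify the Ω-side integrands
    have hΩ₁' : (fun ω => Set.indicator A (1 : (Fin (m + 1) → ℝ) → ENNReal) (V ω) *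
          (Set.indicator C (1 : ℝ → ENNReal) (V ω (Fin.last m) + (D ω).1 + (D ω).2)
            * Set.indicator B (1 : ℝ → ENNReal) (V ω (Fin.last m) + (D ω).1)))
        = fun ω => Set.indicator (V ⁻¹' A ∩ (L T) ⁻¹' C) gE ω := by
      funext ω
      have e0 : V ω (Fin.last m) = Z ω := rfl
      have e1 : Z ω + (D ω).1 = L t ω := by simp [hDdef]
      have e2 : Z ω + (D ω).1 + (D ω).2 = L T ω := by simp [hDdef]
      rw [e0, e2, e1]
      by_cases h1 : V ω ∈ A <;> by_cases h2 : L T ω ∈ C <;>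
        simp [Set.indicator, h1, h2, hgEdef]
    have hΩ₂' : (fun ω => Set.indicator A (1 : (Fin (m + 1) → ℝ) → ENNReal) (V ω) *
          (Set.indicator C (1 : ℝ → ENNReal) (V ω (Fin.last m) + (D ω).1 + (D ω).2)
            * κ (V ω (Fin.last m), V ω (Fin.last m) + (D ω).1 + (D ω).2) B))
        = fun ω => Set.indicator (V ⁻¹' A ∩ (L T) ⁻¹' C) cE ω := by
      funext ω
      have e0 : V ω (Fin.last m) = Z ω := rfl
      have e2 : Z ω + (D ω).1 + (D ω).2 = L T ω := by simp [hDdef]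
      rw [e0, e2]
      by_cases h1 : V ω ∈ A <;> by_cases h2 : L T ω ∈ C <;>
        simp [Set.indicator, h1, h2, hcEdef, hX'def]
    calc ∫⁻ ω in V ⁻¹' A ∩ (L T) ⁻¹' C, gE ω ∂P
        = ∫⁻ ω, Set.indicator (V ⁻¹' A ∩ (L T) ⁻¹' C) gE ω ∂P := by
          rw [lintegral_indicator ((hV hA).inter (hLmeas T hC))]
      _ = ∫⁻ ω, Set.indicator (V ⁻¹' A ∩ (L T) ⁻¹' C) cE ω ∂P := by
          rw [← hΩ₁', ← hΩ₂', hfr₁', hfr₂', hiter₁', hiter₂', hmid]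
      _ = ∫⁻ ω in V ⁻¹' A ∩ (L T) ⁻¹' C, cE ω ∂P := by
          rw [lintegral_indicator ((hV hA).inter (hLmeas T hC))]
  -- set up the measures with densities
  set μ₁ : Measure Ω := P.withDensity gE with hμ₁def
  set μ₂ : Measure Ω := P.withDensity cE with hμ₂def
  haveI : IsFiniteMeasure μ₁ := by
    have hle : ∫⁻ ω, gE ω ∂P ≤ 1 := by
      calc ∫⁻ ω, gE ω ∂P ≤ ∫⁻ _, 1 ∂P := by
            apply lintegral_mono
            intro ω
            by_cases h : L t ω ∈ B <;> simp [hgEdef, Set.indicator, h]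
        _ = 1 := by simp
    exact isFiniteMeasure_withDensity (ne_top_of_le_ne_top (by simp) hle)
  haveI : IsFiniteMeasure μ₂ := by
    have hle : ∫⁻ ω, cE ω ∂P ≤ 1 := by
      calc ∫⁻ ω, cE ω ∂P ≤ ∫⁻ _, 1 ∂P := by
            apply lintegral_mono
            intro ω
            exact prob_le_one
        _ = 1 := by simp
    exact isFiniteMeasure_withDensity (ne_top_of_le_ne_top (by simp) hle)
  have hGle : MeasurableSpace.comap X Prod.instMeasurableSpace ≤ ‹MeasurableSpace Ω› :=
    hX.comap_le
  have hHle : MeasurableSpace.comap X' Prod.instMeasurableSpace ≤ ‹MeasurableSpace Ω› :=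
    hX'.comap_le
  -- the generating π-system
  set Cpi : Set (Set Ω) := {s | ∃ (A : Set (Fin (m + 1) → ℝ)) (C : Set ℝ),
    MeasurableSet A ∧ MeasurableSet C ∧ s = V ⁻¹' A ∩ (L T) ⁻¹' C} with hCpidef
  have hpi : IsPiSystem Cpi := by
    rintro s ⟨A, C, hA, hC, rfl⟩ s' ⟨A', C', hA', hC', rfl⟩ -
    exact ⟨A ∩ A', C ∩ C', hA.inter hA', hC.inter hC', by
      ext ω; simp [Set.mem_inter_iff]; tauto⟩
  have hgen : MeasurableSpace.comap X Prod.instMeasurableSpace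
      = MeasurableSpace.generateFrom Cpi := by
    apply le_antisymm
    · rw [hGeq]
      apply sup_le
      · apply iSup_le
        intro i s hs
        obtain ⟨A, hA, rfl⟩ := hs
        apply MeasurableSpace.measurableSet_generateFrom
        refine ⟨(fun v : Fin (m + 1) → ℝ => v i) ⁻¹' A, Set.univ,
          measurable_pi_apply i hA, MeasurableSet.univ, ?_⟩
        ext ω; simp [hVdef]
      · intro s hs
        obtain ⟨A, hA, rfl⟩ := hs
        apply MeasurableSpace.measurableSet_generateFrom
        refine ⟨Set.univ, A, MeasurableSet.univ, hA, ?_⟩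
        ext ω; simp
    · apply MeasurableSpace.generateFrom_le
      rintro s ⟨A, C, hA, hC, rfl⟩
      refine ⟨A ×ˢ C, hA.prod hC, ?_⟩
      ext ω; simp [hXdef, Set.mem_prod]
  have hCmeas : ∀ s ∈ Cpi, MeasurableSet[MeasurableSpace.comap X Prod.instMeasurableSpace] s := by
    rintro s ⟨A, C, hA, hC, rfl⟩
    refine ⟨A ×ˢ C, hA.prod hC, ?_⟩
    ext ω; simp [hXdef, Set.mem_prod]
  -- equality of the two measures on the comap σ-algebra
  have htrim : μ₁.trim hGle = μ₂.trim hGle := by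
    refine @ext_of_generate_finite Ω (MeasurableSpace.comap X Prod.instMeasurableSpace)
      (μ₁.trim hGle) (μ₂.trim hGle) Cpi hgen hpi ?_ ?_ ?_
    · infer_instance
    · rintro s hs
      obtain ⟨A, C, hA, hC, rfl⟩ := hs
      rw [trim_measurableSet_eq hGle (hCmeas _ ⟨A, C, hA, hC, rfl⟩),
        trim_measurableSet_eq hGle (hCmeas _ ⟨A, C, hA, hC, rfl⟩)]
      rw [hμ₁def, hμ₂def, withDensity_apply _ ((hV hA).inter (hLmeas T hC)),
        withDensity_apply _ ((hV hA).inter (hLmeas T hC))]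
      exact core A C hA hC
    · have huniv : (Set.univ : Set Ω) = V ⁻¹' Set.univ ∩ (L T) ⁻¹' Set.univ := by simp
      rw [trim_measurableSet_eq hGle MeasurableSet.univ,
        trim_measurableSet_eq hGle MeasurableSet.univ]
      rw [hμ₁def, hμ₂def, withDensity_apply _ MeasurableSet.univ,
        withDensity_apply _ MeasurableSet.univ]
      rw [show (Set.univ : Set Ω) = V ⁻¹' Set.univ ∩ (L T) ⁻¹' Set.univ from huniv]
      exact core Set.univ Set.univ MeasurableSet.univ MeasurableSet.univ
  have hext : ∀ s, MeasurableSet[MeasurableSpace.comap X Prod.instMeasurableSpace] s →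
      μ₁ s = μ₂ s := by
    intro s hs
    have h1 : μ₁ s = μ₁.trim hGle s := (trim_measurableSet_eq hGle hs).symm
    have h2 : μ₂ s = μ₂.trim hGle s := (trim_measurableSet_eq hGle hs).symm
    rw [h1, h2, htrim]
  -- integrability of c
  haveI : SigmaFinite (P.trim hHle) := inferInstance
  haveI : SigmaFinite (P.trim hGle) := inferInstance
  have hcInt : Integrable c P := integrable_condExp.congr hc.symm
  have hcmeas' : AEStronglyMeasurable[
      MeasurableSpace.comap X Prod.instMeasurableSpace] c P := by
    have hle : MeasurableSpace.comap X' Prod.instMeasurableSpace ≤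
        MeasurableSpace.comap X Prod.instMeasurableSpace := by
      have hπ : Measurable fun p : (Fin (m + 1) → ℝ) × ℝ => (p.1 (Fin.last m), p.2) :=
        ((measurable_pi_apply _).comp measurable_fst).prodMk measurable_snd
      have : X' = (fun p : (Fin (m + 1) → ℝ) × ℝ => (p.1 (Fin.last m), p.2)) ∘ X := rfl
      rw [this, ← MeasurableSpace.comap_comp]
      exact MeasurableSpace.comap_mono hπ.comap_le
    exact ((stronglyMeasurable_condExp.aestronglyMeasurable).congr hc.symm).mono hle
  have hcnonneg : ∀ ω, 0 ≤ c ω := by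
    intro ω
    rw [hcval ω]
    exact ENNReal.toReal_nonneg
  have hgnonneg : ∀ ω, 0 ≤ g ω := by
    intro ω
    by_cases h : L t ω ∈ B <;> simp [hgdef, hfdef, Set.indicator, h]
  -- the set-integral equality
  have hseteq : ∀ s : Set Ω,
      MeasurableSet[MeasurableSpace.comap X Prod.instMeasurableSpace] s → P s < ⊤ →
      ∫ ω in s, c ω ∂P = ∫ ω in s, g ω ∂P := by
    intro s hs _
    have hsm : MeasurableSet s := hGle s hs
    have hcint : ∫ ω in s, c ω ∂P = (∫⁻ ω in s, ENNReal.ofReal (c ω) ∂P).toReal := by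
      rw [integral_eq_lintegral_of_nonneg_ae (Filter.Eventually.of_forall hcnonneg)
        (hcInt.aestronglyMeasurable.restrict)]
    have hgint : ∫ ω in s, g ω ∂P = (∫⁻ ω in s, ENNReal.ofReal (g ω) ∂P).toReal := by
      rw [integral_eq_lintegral_of_nonneg_ae (Filter.Eventually.of_forall hgnonneg)
        (hgInt.aestronglyMeasurable.restrict)]
    rw [hcint, hgint]
    congr 1
    have e1 : ∫⁻ ω in s, ENNReal.ofReal (c ω) ∂P = μ₂ s := by
      rw [hμ₂def, withDensity_apply _ hsm]
      exact setLIntegral_congr_fun hsm (fun ω _ => hcE_eq ω)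
    have e2 : ∫⁻ ω in s, ENNReal.ofReal (g ω) ∂P = μ₁ s := by
      rw [hμ₁def, withDensity_apply _ hsm]
      exact setLIntegral_congr_fun hsm (fun ω _ => hgE_eq ω)
    rw [e1, e2, hext s hs]
  -- conclude via uniqueness of conditional expectation
  have hcondG : c =ᵐ[P] P[g | MeasurableSpace.comap X Prod.instMeasurableSpace] :=
    ae_eq_condExp_of_forall_setIntegral_eq hGle hgInt
      (fun s _ _ => hcInt.integrableOn) hseteq hcmeas'
  exact hcondG.symm.trans hc
end

section
/- Let 0 = t_0 < t_1 < ⋯ < t_n = T partition [0,T], let {f_t} be a convolution semigroup of densities, and let ν(dz) = p(z)dz be absolutely continuous with 0 < f_T(z) < ∞ ν-a.e. Then the joint density of the increments Δ_i = L_{t_i,T} − L_{t_{i−1},T} of the Lévy random bridge LRB_C([0,T],{f_t},ν) is (y_1,…,y_n) ↦ (p(Σ y_i)/f_T(Σ y_i)) ∏_{i=1}^n f_{α_i}(y_i), where α_i = t_i − t_{i−1}; i.e., the increments have a generalized multivariate Liouville distribution. -/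
open MeasureTheory Real

/-- Predecessor value: `prevR v i = v (i-1)` with the convention `v (-1) = 0`. -/
def prevR {n : ℕ} (v : Fin n → ℝ) (i : Fin n) : ℝ :=
  if (i : ℕ) = 0 then 0
  else v ⟨(i : ℕ) - 1, Nat.lt_of_le_of_lt (Nat.sub_le _ _) i.isLt⟩

lemma measurable_prevR {n : ℕ} (i : Fin n) : Measurable fun x : Fin n → ℝ => prevR x i := by
  unfold prevR
  split_ifs
  · exact measurable_const
  · exact measurable_pi_apply _

/-- The increment map as a linear map. -/
def phiLin (n : ℕ) : (Fin n → ℝ) →ₗ[ℝ] (Fin n → ℝ) where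
  toFun := fun x i => x i - prevR x i
  map_add' := by
    intro x y; funext i
    by_cases h : (i : ℕ) = 0 <;> simp [prevR, h] <;> ring
  map_smul' := by
    intro c x; funext i
    by_cases h : (i : ℕ) = 0 <;> simp [prevR, h] <;> ring

lemma phiLin_det (n : ℕ) : LinearMap.det (phiLin n) = 1 := by
  classical
  rw [← LinearMap.det_toMatrix' (phiLin n)]
  rw [Matrix.det_of_lowerTriangular]
  · apply Finset.prod_eq_one
    intro i _
    rw [LinearMap.toMatrix'_apply]
    show ((Pi.single i (1:ℝ) : Fin n → ℝ) i) - prevR (Pi.single i (1:ℝ) : Fin n → ℝ) i = 1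
    by_cases h : (i : ℕ) = 0
    · simp [prevR, h]
    · have hne : (⟨(i:ℕ) - 1, Nat.lt_of_le_of_lt (Nat.sub_le _ _) i.isLt⟩ : Fin n) ≠ i := by
        intro hEq
        have := congrArg Fin.val hEq
        simp at this
        omega
      simp [prevR, h, hne]
  · intro i j hij
    have hij' : (i : Fin n) < j := hij
    rw [LinearMap.toMatrix'_apply]
    show ((Pi.single j (1:ℝ) : Fin n → ℝ) i) - prevR (Pi.single j (1:ℝ) : Fin n → ℝ) i = 0
    have h1 : i ≠ j := ne_of_lt hij'
    by_cases h : (i : ℕ) = 0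
    · simp [prevR, h, h1]
    · have hne : (⟨(i:ℕ) - 1, Nat.lt_of_le_of_lt (Nat.sub_le _ _) i.isLt⟩ : Fin n) ≠ j := by
        intro hEq
        have := congrArg Fin.val hEq
        have hlt : (i : ℕ) < j := Fin.lt_iff_val_lt_val.mp hij'
        simp at this
        omega
      simp [prevR, h, h1, hne]

lemma telescope {n : ℕ} (hn : 0 < n) (x : Fin n → ℝ) :
    ∑ i, (x i - prevR x i) = x ⟨n - 1, Nat.sub_lt hn Nat.one_pos⟩ := by
  classical
  set w : ℕ → ℝ := fun k => if h : 0 < k ∧ k ≤ n then x ⟨k - 1, by omega⟩ else 0 with hw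
  have hterm : ∀ i : Fin n, x i - prevR x i = w ((i : ℕ) + 1) - w (i : ℕ) := by
    intro i
    have h1 : w ((i : ℕ) + 1) = x i := by
      simp only [hw]
      rw [dif_pos ⟨Nat.succ_pos _, i.isLt⟩]
      exact congrArg x (Fin.ext (by simp))
    rw [h1]
    congr 1
    by_cases h : (i : ℕ) = 0
    · simp [prevR, hw, h]
    · simp only [prevR, hw, if_neg h]
      rw [dif_pos ⟨Nat.pos_of_ne_zero h, le_of_lt i.isLt⟩]
  calc ∑ i, (x i - prevR x i) = ∑ i : Fin n, (w ((i:ℕ)+1) - w (i:ℕ)) := by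
        exact Finset.sum_congr rfl fun i _ => hterm i
    _ = ∑ k ∈ Finset.range n, (w (k+1) - w k) := Fin.sum_univ_eq_sum_range (fun k => w (k+1) - w k) n
    _ = w n - w 0 := Finset.sum_range_sub w n
    _ = x ⟨n-1, by omega⟩ := by simp [hw, hn]

lemma map_withDensity_comm {α β : Type*} [MeasurableSpace α] [MeasurableSpace β]
    (μ : Measure α) (e : α → β) (he : Measurable e) (h : β → ENNReal) (hh : Measurable h) :
    Measure.map e (μ.withDensity (h ∘ e)) = (Measure.map e μ).withDensity h := by
  ext s hs
  rw [Measure.map_apply he hs, withDensity_apply _ hs, withDensity_apply _ (he hs),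
    setLIntegral_map hs hh he]
  rfl

/-- The increments `Δ_i = L_{t_i,T} − L_{t_{i−1},T}` of a Lévy random bridge with
absolutely continuous terminal law `ν(dz) = p(z)dz` have joint density
`(y_1,…,y_n) ↦ (p(Σ y_i)/f_T(Σ y_i)) ∏ f_{α_i}(y_i)` — a generalized multivariate
Liouville distribution. The LRB is characterized by its finite-dimensional density
`(p(x_n)/f_T(x_n)) ∏ f_{t_i−t_{i−1}}(x_i − x_{i−1})` at the times `t_1 < ⋯ < t_n = T`. -/
theorem lrb_increments_liouville {Ω : Type*} [MeasurableSpace Ω]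
    (P : Measure Ω) [IsProbabilityMeasure P]
    (L : ℝ → Ω → ℝ) (hLmeas : ∀ u, Measurable (L u))
    (hL0 : ∀ ω, L 0 ω = 0)
    (f : ℝ → ℝ → ℝ) (hfmeas : ∀ u, Measurable (f u)) (hfnn : ∀ u x, 0 ≤ f u x)
    (p : ℝ → ℝ) (hpmeas : Measurable p) (hpnn : ∀ z, 0 ≤ p z)
    (T : ℝ) (hT : 0 < T)
    (hpos : ∀ᵐ z : ℝ, 0 < f T z)
    (n : ℕ) (hn : 0 < n) (t : Fin n → ℝ) (hmono : StrictMono t)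
    (h0 : 0 < t ⟨0, hn⟩) (hlast : t ⟨n - 1, by omega⟩ = T)
    (hjoint : Measure.map (fun ω => fun i => L (t i) ω) P
      = (volume : Measure (Fin n → ℝ)).withDensity fun x =>
          ENNReal.ofReal ((p (x ⟨n - 1, by omega⟩) / f T (x ⟨n - 1, by omega⟩)) *
            ∏ i, f (t i - prevR t i) (x i - prevR x i))) :
    Measure.map (fun ω => fun i => L (t i) ω - L (prevR t i) ω) P
      = (volume : Measure (Fin n → ℝ)).withDensity fun y =>
          ENNReal.ofReal ((p (∑ i, y i) / f T (∑ i, y i)) *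
            ∏ i, f (t i - prevR t i) (y i)) := by
  classical
  set Φ : (Fin n → ℝ) → (Fin n → ℝ) := fun x i => x i - prevR x i with hΦdef
  have hΦmeas : Measurable Φ :=
    measurable_pi_lambda _ fun i => (measurable_pi_apply i).sub (measurable_prevR i)
  have hmapmeas : Measurable (fun ω => fun i => L (t i) ω) :=
    measurable_pi_lambda _ fun i => hLmeas _
  have hcomp : (fun ω => fun i => L (t i) ω - L (prevR t i) ω)
      = Φ ∘ (fun ω => fun i => L (t i) ω) := by
    funext ω
    funext i
    show L (t i) ω - L (prevR t i) ω = L (t i) ω - prevR (fun j => L (t j) ω) i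
    congr 1
    by_cases h : (i : ℕ) = 0
    · simp [prevR, h, hL0]
    · simp [prevR, h]
  set H : (Fin n → ℝ) → ENNReal := fun y =>
    ENNReal.ofReal ((p (∑ i, y i) / f T (∑ i, y i)) * ∏ i, f (t i - prevR t i) (y i))
    with hHdef
  have hsum : Measurable fun y : Fin n → ℝ => ∑ i, y i :=
    Finset.measurable_sum _ fun i _ => measurable_pi_apply i
  have hHmeas : Measurable H := by
    apply Measurable.ennreal_ofReal
    exact ((hpmeas.comp hsum).div ((hfmeas T).comp hsum)).mul
      (Finset.measurable_prod _ fun i _ => (hfmeas _).comp (measurable_pi_apply i))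
  have hdet : Measure.map Φ (volume : Measure (Fin n → ℝ)) = volume := by
    have hd : LinearMap.det (phiLin n) ≠ 0 := by rw [phiLin_det]; norm_num
    have := Real.map_linearMap_volume_pi_eq_smul_volume_pi hd
    have hcoe : ⇑(phiLin n) = Φ := rfl
    rw [hcoe, phiLin_det] at this
    simpa using this
  have hHΦ : H ∘ Φ = fun x =>
      ENNReal.ofReal ((p (x ⟨n - 1, by omega⟩) / f T (x ⟨n - 1, by omega⟩)) *
        ∏ i, f (t i - prevR t i) (x i - prevR x i)) := by
    funext x
    show H (Φ x) = _
    rw [hHdef]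
    simp only [hΦdef]
    rw [telescope hn x]
  rw [hcomp, ← Measure.map_map hΦmeas hmapmeas, hjoint]
  conv_rhs => rw [← hdet]
  rw [← map_withDensity_comm volume Φ hΦmeas H hHmeas, hHΦ]
end
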